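/- Let S be a nonempty finite index set of cardinality n, and for each i in S let Y_it, Y_ic be real numbers and p_i ∈ (0,1). Define μ_t = (1/n)·Σ Y_it, μ_c = (1/n)·Σ Y_ic, p_t = (1/n)·Σ p_i, p_c = 1 − p_t, s_t = (1/n)·Σ Y_it·p_i − μ_t·p_t, s_c = (1/n)·Σ Y_ic·(1 − p_i) − μ_c·p_c, ρ_t = μ_t + s_t/p_t, ρ_c = μ_c + s_c/p_c, S_tt = (1/n)·Σ p_i(1−p_i)(Y_it−ρ_t)², S_cc = (1/n)·Σ p_i(1−p_i)(Y_ic−ρ_c)², S_tc = (1/n)·Σ p_i(1−p_i)(Y_it−ρ_t)(Y_ic−ρ_c). Let (W_i)_{i∈S} be independent Bernoulli random variables with P(W_i = 1) = p_i. Then Var( (1/(n·p_t))·Σ_{i∈S} W_i·(Y_it − ρ_t) − (1/(n·p_c))·Σ_{i∈S} (1 − W_i)·(Y_ic − ρ_c) ) = (1/n)·( S_tt/p_t² + S_cc/p_c² + 2·S_tc/(p_t·p_c) ). -/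

import Mathlib

open MeasureTheory ProbabilityTheory

lemma aux_var_add_const {Ω : Type*} [MeasurableSpace Ω] (μ : Measure Ω) [IsProbabilityMeasure μ]
    (X : Ω → ℝ) (hX : Integrable X μ) (c : ℝ) :
    variance (fun ω => X ω + c) μ = variance X μ := by
  have h : ∀ ω : Ω, X ω + c - ∫ x, (X x + c) ∂μ = X ω - ∫ x, X x ∂μ := by
    intro ω
    rw [integral_add hX (integrable_const c), integral_const]
    simp
  rw [variance, variance, evariance, evariance]
  congr 1
  exact lintegral_congr fun ω => by rw [h ω]

lemma aux_bernoulli_var {Ω : Type*} [MeasurableSpace Ω] (μ : Measure Ω) [IsProbabilityMeasure μ]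
    (X : Ω → ℝ) (hm : Measurable X) (h01 : ∀ ω, X ω = 0 ∨ X ω = 1) (q : ℝ) (hq : 0 ≤ q)
    (hX : μ {ω | X ω = 1} = ENNReal.ofReal q) :
    variance X μ = q * (1 - q) := by
  have hmem : MemLp X 2 μ :=
    MemLp.of_bound hm.aestronglyMeasurable 1 (ae_of_all _ fun ω => by
      rcases h01 ω with h | h <;> simp [h])
  have hind : X = Set.indicator {ω | X ω = 1} (fun _ => (1 : ℝ)) := by
    funext ω
    rcases h01 ω with h | h <;> simp [Set.indicator_apply, h]
  have hms : MeasurableSet {ω | X ω = 1} := hm (measurableSet_singleton 1)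
  have hEX : ∫ ω, X ω ∂μ = q := by
    rw [hind]
    rw [integral_indicator_const _ hms, measureReal_def, hX, smul_eq_mul, mul_one,
      ENNReal.toReal_ofReal hq]
  rw [variance_eq_sub hmem]
  have h2 : μ[X ^ 2] = q := by
    have hsq : (X ^ 2 : Ω → ℝ) = X := by
      funext ω; rcases h01 ω with h | h <;> simp [h]
    rw [hsq, hEX]
  rw [h2, hEX]; ring

/-- Theorem 1 (delta-method variance of the stratum estimator): with independent
Bernoulli(`p_i`) treatment indicators `W_i`, the variance of the linearization
`(1/(n p_t)) Σ W_i (Y_it − ρ_t) − (1/(n p_c)) Σ (1−W_i)(Y_ic − ρ_c)` equals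
`(1/n)(S_tt/p_t² + S_cc/p_c² + 2 S_tc/(p_t p_c))`. -/
theorem delta_method_variance_stratum
    {Ω ι : Type*} [MeasurableSpace Ω] (μ : Measure Ω) [IsProbabilityMeasure μ]
    (S : Finset ι) (hS : S.Nonempty)
    (Yt Yc p : ι → ℝ) (hp : ∀ i ∈ S, p i ∈ Set.Ioo (0 : ℝ) 1)
    (W : ι → Ω → ℝ)
    (hWmeas : ∀ i, Measurable (W i))
    (hW01 : ∀ i, ∀ ω, W i ω = 0 ∨ W i ω = 1)
    (hWp : ∀ i ∈ S, μ {ω | W i ω = 1} = ENNReal.ofReal (p i))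
    (hindep : iIndepFun W μ)
    (n μt μc pt pc st sc ρt ρc Stt Scc Stc : ℝ)
    (hn : n = (S.card : ℝ))
    (hμt : μt = (1 / n) * ∑ i ∈ S, Yt i)
    (hμc : μc = (1 / n) * ∑ i ∈ S, Yc i)
    (hpt : pt = (1 / n) * ∑ i ∈ S, p i)
    (hpc : pc = 1 - pt)
    (hst : st = (1 / n) * (∑ i ∈ S, Yt i * p i) - μt * pt)
    (hsc : sc = (1 / n) * (∑ i ∈ S, Yc i * (1 - p i)) - μc * pc)
    (hρt : ρt = μt + st / pt)
    (hρc : ρc = μc + sc / pc)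
    (hStt : Stt = (1 / n) * ∑ i ∈ S, p i * (1 - p i) * (Yt i - ρt) ^ 2)
    (hScc : Scc = (1 / n) * ∑ i ∈ S, p i * (1 - p i) * (Yc i - ρc) ^ 2)
    (hStc : Stc = (1 / n) * ∑ i ∈ S, p i * (1 - p i) * (Yt i - ρt) * (Yc i - ρc)) :
    variance (fun ω =>
        (1 / (n * pt)) * ∑ i ∈ S, W i ω * (Yt i - ρt)
          - (1 / (n * pc)) * ∑ i ∈ S, (1 - W i ω) * (Yc i - ρc)) μ
      = (1 / n) * (Stt / pt ^ 2 + Scc / pc ^ 2 + 2 * Stc / (pt * pc)) := by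
  have hn0 : 0 < n := by
    rw [hn]; exact_mod_cast Finset.card_pos.mpr hS
  have hpt0 : 0 < pt := by
    rw [hpt]
    exact mul_pos (by positivity) (Finset.sum_pos (fun i hi => (hp i hi).1) hS)
  have hpt1 : pt < 1 := by
    rw [hpt]
    have hlt : ∑ i ∈ S, p i < ∑ i ∈ S, (1 : ℝ) :=
      Finset.sum_lt_sum_of_nonempty hS (fun i hi => (hp i hi).2)
    have h1 : ∑ i ∈ S, (1 : ℝ) = n := by rw [hn]; simp
    rw [div_mul_eq_mul_div, one_mul, div_lt_one hn0]
    linarith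
  have hpc0 : 0 < pc := by rw [hpc]; linarith
  set a : ι → ℝ := fun i => (Yt i - ρt) / (n * pt) + (Yc i - ρc) / (n * pc) with ha
  set C : ℝ := -((1 / (n * pc)) * ∑ i ∈ S, (Yc i - ρc)) with hC
  have hmem : ∀ i, MemLp (fun ω => a i * W i ω) 2 μ := by
    intro i
    refine MemLp.of_bound ((hWmeas i).const_mul _).aestronglyMeasurable |a i|
      (ae_of_all _ fun ω => ?_)
    rcases hW01 i ω with h | h <;> simp [h, abs_nonneg]
  -- rewrite the random variable as a sum of independent terms plus a constant
  have key : ∀ ω : Ω, (1 / (n * pt)) * ∑ i ∈ S, W i ω * (Yt i - ρt)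
      - (1 / (n * pc)) * ∑ i ∈ S, (1 - W i ω) * (Yc i - ρc)
      = ∑ i ∈ S, (a i * W i ω + (-(1 / (n * pc)) * (Yc i - ρc))) := by
    intro ω
    rw [Finset.mul_sum, Finset.mul_sum, ← Finset.sum_sub_distrib]
    refine Finset.sum_congr rfl fun i hi => ?_
    rw [ha]
    have h1 : n * pt ≠ 0 := by positivity
    have h2 : n * pc ≠ 0 := by positivity
    field_simp
    ring
  have hfun : (fun ω =>
        (1 / (n * pt)) * ∑ i ∈ S, W i ω * (Yt i - ρt)
          - (1 / (n * pc)) * ∑ i ∈ S, (1 - W i ω) * (Yc i - ρc))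
      = fun ω => (∑ i ∈ S, a i * W i ω) + C := by
    funext ω
    rw [key ω, Finset.sum_add_distrib, hC, Finset.mul_sum]
    simp [neg_mul, Finset.sum_neg_distrib]
  rw [hfun]
  have hint : Integrable (fun ω => ∑ i ∈ S, a i * W i ω) μ := by
    apply integrable_finset_sum
    intro i hi
    exact (hmem i).integrable one_le_two
  rw [aux_var_add_const μ _ hint C]
  have hsum : (fun ω => ∑ i ∈ S, a i * W i ω) = ∑ i ∈ S, (fun ω => a i * W i ω) := by
    funext ω; simp
  rw [hsum, IndepFun.variance_sum (fun i _ => hmem i) ?pair]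
  case pair =>
    intro i hi j hj hij
    exact (hindep.indepFun hij).comp (measurable_const_mul (a i)) (measurable_const_mul (a j))
  have hvar : ∀ i ∈ S, variance (fun ω => a i * W i ω) μ = a i ^ 2 * (p i * (1 - p i)) := by
    intro i hi
    rw [variance_const_mul (a i) (W i) μ,
      aux_bernoulli_var μ (W i) (hWmeas i) (hW01 i) (p i) (hp i hi).1.le (hWp i hi)]
  rw [Finset.sum_congr rfl hvar]
  -- final algebra
  have hrhs : (1 / n) * (Stt / pt ^ 2 + Scc / pc ^ 2 + 2 * Stc / (pt * pc))
      = ∑ i ∈ S, (p i * (1 - p i) * (Yt i - ρt) ^ 2 / (n ^ 2 * pt ^ 2)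
          + p i * (1 - p i) * (Yc i - ρc) ^ 2 / (n ^ 2 * pc ^ 2)
          + 2 * (p i * (1 - p i) * (Yt i - ρt) * (Yc i - ρc)) / (n ^ 2 * pt * pc)) := by
    rw [hStt, hScc, hStc]
    simp only [Finset.mul_sum, Finset.sum_div, ← Finset.sum_add_distrib]
    refine Finset.sum_congr rfl fun i hi => ?_
    have h1 : (n : ℝ) ≠ 0 := hn0.ne'
    have h2 : pt ≠ 0 := hpt0.ne'
    have h3 : pc ≠ 0 := hpc0.ne'
    field_simp
  rw [hrhs]
  refine Finset.sum_congr rfl fun i hi => ?_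
  rw [ha]
  have h1 : (n : ℝ) ≠ 0 := hn0.ne'
  have h2 : pt ≠ 0 := hpt0.ne'
  have h3 : pc ≠ 0 := hpc0.ne'
  field_simp
  ring
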